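/- Let Ω be S_n-symmetric and measurable, g_0 : Ω → ℝ nonnegative measurable with h(x) = (1/n!) Σ_{π∈S_n} g_0(πx) non-zero a.e., and let φ : Ω → [0,1] satisfy (1/n!) Σ_{π∈S_n} (g_0(πx)/h(x)) φ(πx) = α a.e. Then ∫_Ω g_0 φ dμ = α · n! · ∫_{Ω∩T} h dμ. -/

import Mathlib

open MeasureTheory

/-- The action of a permutation `π` on vectors: `(π • x) k = x (π k)`. -/
def permAct {n : ℕ} (π : Equiv.Perm (Fin n)) (x : Fin n → ℝ) : Fin n → ℝ := x ∘ π

/-- The open chamber of strictly increasing vectors. -/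
def ascSet (n : ℕ) : Set (Fin n → ℝ) := {x | StrictMono x}

/-- The symmetrization of `g₀`. -/
noncomputable def symmetrize {n : ℕ} (g₀ : (Fin n → ℝ) → ℝ) (x : Fin n → ℝ) : ℝ :=
  (1 / (n.factorial : ℝ)) * ∑ π : Equiv.Perm (Fin n), g₀ (permAct π x)

lemma permME_eq {n : ℕ} (π : Equiv.Perm (Fin n)) :
    ⇑(MeasurableEquiv.piCongrLeft (fun _ : Fin n => ℝ) π.symm) = permAct π := by
  funext x k
  simp [MeasurableEquiv.coe_piCongrLeft, Equiv.piCongrLeft_apply, eq_rec_constant, permAct]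

lemma permAct_mp {n : ℕ} (π : Equiv.Perm (Fin n)) :
    MeasurePreserving (permAct π) (volume) (volume) := by
  have := volume_measurePreserving_piCongrLeft (fun _ : Fin n => ℝ) π.symm
  rwa [permME_eq π] at this

lemma permAct_emb {n : ℕ} (π : Equiv.Perm (Fin n)) : MeasurableEmbedding (permAct π) := by
  have := (MeasurableEquiv.piCongrLeft (fun _ : Fin n => ℝ) π.symm).measurableEmbedding
  rwa [permME_eq π] at this

lemma permAct_permAct {n : ℕ} (π σ : Equiv.Perm (Fin n)) (x : Fin n → ℝ) :
    permAct π (permAct σ x) = permAct (σ * π) x := rfl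

lemma measurable_ascSet (n : ℕ) : MeasurableSet (ascSet n) := by
  have : ascSet n = ⋂ (i : Fin n), ⋂ (j : Fin n), {x : Fin n → ℝ | i < j → x i < x j} := by
    ext x
    simp only [ascSet, Set.mem_setOf_eq, Set.mem_iInter]
    exact ⟨fun h i j hij => h hij, fun h a b hab => h a b hab⟩
  rw [this]
  refine MeasurableSet.iInter fun i => MeasurableSet.iInter fun j => ?_
  by_cases hij : i < j
  · simp only [hij, forall_true_left]
    exact measurableSet_lt (measurable_pi_apply i) (measurable_pi_apply j)
  · simp only [hij, false_implies]
    exact MeasurableSet.univ.congr (by ext x; simp [hij])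

lemma symmetrize_measurable {n : ℕ} {g₀ : (Fin n → ℝ) → ℝ} (hg : Measurable g₀) :
    Measurable (symmetrize g₀) := by
  unfold symmetrize
  exact (Finset.measurable_sum _ fun π _ => hg.comp (permAct_mp π).measurable).const_mul _

lemma symmetrize_invariant {n : ℕ} (g₀ : (Fin n → ℝ) → ℝ) (σ : Equiv.Perm (Fin n))
    (x : Fin n → ℝ) : symmetrize g₀ (permAct σ x) = symmetrize g₀ x := by
  unfold symmetrize
  congr 1
  rw [← Equiv.sum_comp (Equiv.mulLeft σ) (fun π => g₀ (permAct π x))]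
  refine Finset.sum_congr rfl fun π _ => ?_
  rw [permAct_permAct]
  rfl

lemma hyperplane_null {n : ℕ} (i j : Fin n) (hij : i ≠ j) :
    volume {x : Fin n → ℝ | x i = x j} = 0 := by
  set L : (Fin n → ℝ) →ₗ[ℝ] ℝ :=
    (LinearMap.proj i : (Fin n → ℝ) →ₗ[ℝ] ℝ) - (LinearMap.proj j : (Fin n → ℝ) →ₗ[ℝ] ℝ) with hL
  have hset : {x : Fin n → ℝ | x i = x j} = (LinearMap.ker L : Set (Fin n → ℝ)) := by
    ext x; simp [hL, sub_eq_zero, LinearMap.mem_ker]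
  rw [hset]
  refine Measure.addHaar_submodule volume _ ?_
  intro htop
  have : (Pi.single i 1 : Fin n → ℝ) ∈ LinearMap.ker L := htop ▸ Submodule.mem_top
  simp only [LinearMap.mem_ker, hL, LinearMap.sub_apply, LinearMap.proj_apply] at this
  rw [Pi.single_eq_same, Pi.single_eq_of_ne (Ne.symm hij)] at this
  norm_num at this

lemma noninj_null (n : ℕ) : volume {x : Fin n → ℝ | ¬ Function.Injective x} = 0 := by
  have hsub : {x : Fin n → ℝ | ¬ Function.Injective x} ⊆
      ⋃ (p : Fin n × Fin n) (_ : p.1 ≠ p.2), {x : Fin n → ℝ | x p.1 = x p.2} := by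
    intro x hx
    simp only [Set.mem_setOf_eq, Function.Injective, not_forall] at hx
    obtain ⟨a, b, hab, hne⟩ := hx
    exact Set.mem_iUnion.2 ⟨(a, b), Set.mem_iUnion.2 ⟨hne, hab⟩⟩
  exact measure_mono_null hsub (measure_iUnion_null fun p => measure_iUnion_null fun hp =>
    hyperplane_null p.1 p.2 hp)

lemma exists_sort {n : ℕ} {x : Fin n → ℝ} (hx : Function.Injective x) :
    ∃ σ : Equiv.Perm (Fin n), StrictMono (x ∘ σ) := by
  refine ⟨Tuple.sort x, (Tuple.monotone_sort x).strictMono_of_injective ?_⟩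
  exact hx.comp (Tuple.sort x).injective

lemma sort_unique {n : ℕ} {x : Fin n → ℝ} {σ τ : Equiv.Perm (Fin n)}
    (hσ : StrictMono (x ∘ σ)) (hτ : StrictMono (x ∘ τ)) : σ = τ := by
  have hxinj : Function.Injective x := by
    intro a b hab
    have := hσ.injective (a₁ := σ.symm a) (a₂ := σ.symm b) (by simpa [Function.comp] using hab)
    simpa using congrArg σ this
  have hr : Set.range (x ∘ ⇑σ) = Set.range (x ∘ ⇑τ) := by
    rw [Set.range_comp, Set.range_comp, Equiv.range_eq_univ, Equiv.range_eq_univ]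
  haveI : WellFoundedLT (Fin n) := inferInstance
  have hfg : x ∘ ⇑σ = x ∘ ⇑τ := Set.range_injOn_strictMono (β := Fin n) (γ := ℝ) hσ hτ hr
  ext k
  exact congrArg Fin.val (hxinj (congrFun hfg k))

/-- For a generalized permutation test `φ` at level `α` with respect to `g₀`,
`∫_Ω g₀ φ = α n! ∫_{Ω ∩ T} h`. -/
theorem stmt_9 {n : ℕ} (Ω : Set (Fin n → ℝ)) (hΩmeas : MeasurableSet Ω)
    (hΩsym : ∀ (π : Equiv.Perm (Fin n)) (x : Fin n → ℝ), x ∈ Ω → permAct π x ∈ Ω)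
    (g₀ : (Fin n → ℝ) → ℝ) (hg₀meas : Measurable g₀) (hg₀pos : ∀ x, 0 ≤ g₀ x)
    (hg₀int : IntegrableOn g₀ Ω volume)
    (hne : ∀ᵐ x ∂(volume.restrict Ω), symmetrize g₀ x ≠ 0)
    (α : ℝ) (φ : (Fin n → ℝ) → ℝ) (hφmeas : Measurable φ)
    (hφ01 : ∀ x, φ x ∈ Set.Icc (0 : ℝ) 1)
    (hgperm : ∀ᵐ x ∂(volume.restrict Ω),
      (1 / (n.factorial : ℝ)) *
        ∑ π : Equiv.Perm (Fin n), (g₀ (permAct π x) / symmetrize g₀ x) * φ (permAct π x) = α) :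
    ∫ x in Ω, g₀ x * φ x
      = α * (n.factorial : ℝ) * ∫ x in Ω ∩ ascSet n, symmetrize g₀ x := by
  classical
  have hfac : (n.factorial : ℝ) ≠ 0 := Nat.cast_ne_zero.mpr n.factorial_ne_zero
  -- preimage of Ω under permAct is Ω
  have hpre : ∀ π : Equiv.Perm (Fin n), permAct π ⁻¹' Ω = Ω := by
    intro π
    ext x
    constructor
    · intro hx
      have := hΩsym π⁻¹ _ hx
      rwa [permAct_permAct, mul_inv_cancel, show permAct 1 x = x from rfl] at this
    · intro hx; exact hΩsym π x hx
  -- measure preserving restricted to Ω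
  have hmpΩ : ∀ π : Equiv.Perm (Fin n),
      MeasurePreserving (permAct π) (volume.restrict Ω) (volume.restrict Ω) := by
    intro π
    have := (permAct_mp π).restrict_preimage_emb (permAct_emb π) Ω
    rwa [hpre π] at this
  -- integrability of compositions
  have hcompInt : ∀ (f : (Fin n → ℝ) → ℝ), IntegrableOn f Ω volume →
      ∀ π : Equiv.Perm (Fin n), IntegrableOn (fun x => f (permAct π x)) Ω volume := by
    intro f hf π
    exact ((hmpΩ π).integrable_comp_emb (permAct_emb π)).mpr hf
  -- integrability of g₀ * φ on Ω
  have hGΦint : IntegrableOn (fun x => g₀ x * φ x) Ω volume := by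
    refine Integrable.mono hg₀int ((hg₀meas.mul hφmeas).aestronglyMeasurable) ?_
    filter_upwards with x
    rw [Real.norm_eq_abs, Real.norm_eq_abs, abs_of_nonneg (hg₀pos x),
      abs_of_nonneg (mul_nonneg (hg₀pos x) (hφ01 x).1)]
    calc g₀ x * φ x ≤ g₀ x * 1 := mul_le_mul_of_nonneg_left (hφ01 x).2 (hg₀pos x)
      _ = g₀ x := mul_one _
  -- integrability of symmetrize on Ω
  have hsymmInt : IntegrableOn (symmetrize g₀) Ω volume := by
    unfold symmetrize
    refine Integrable.const_mul ?_ _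
    exact integrable_finset_sum _ (fun π _ => hcompInt g₀ hg₀int π)
  -- change of variables on Ω
  have hchg : ∀ (f : (Fin n → ℝ) → ℝ), ∀ π : Equiv.Perm (Fin n),
      ∫ x in Ω, f (permAct π x) = ∫ x in Ω, f x := by
    intro f π
    have := (permAct_mp π).setIntegral_preimage_emb (permAct_emb π) f Ω
    rwa [hpre π] at this
  -- Step 1: a.e. pointwise identity multiplied by h
  have key : ∀ᵐ x ∂(volume.restrict Ω),
      (1 / (n.factorial : ℝ)) * ∑ π : Equiv.Perm (Fin n),
        g₀ (permAct π x) * φ (permAct π x) = α * symmetrize g₀ x := by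
    filter_upwards [hgperm, hne] with x hx hhx
    have hsum : ∑ π : Equiv.Perm (Fin n), g₀ (permAct π x) * φ (permAct π x)
        = (∑ π : Equiv.Perm (Fin n),
            (g₀ (permAct π x) / symmetrize g₀ x) * φ (permAct π x)) * symmetrize g₀ x := by
      rw [Finset.sum_mul]
      refine Finset.sum_congr rfl fun π _ => ?_
      field_simp
    rw [hsum, ← mul_assoc, hx]
  -- Step 2: integrate the identity
  have hInt1 : ∫ x in Ω, g₀ x * φ x = α * ∫ x in Ω, symmetrize g₀ x := by
    have hL : ∫ x in Ω, ((1 / (n.factorial : ℝ)) * ∑ π : Equiv.Perm (Fin n),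
        g₀ (permAct π x) * φ (permAct π x)) = ∫ x in Ω, α * symmetrize g₀ x :=
      integral_congr_ae key
    rw [integral_const_mul, integral_const_mul] at hL
    have hsum : ∫ x in Ω, ∑ π : Equiv.Perm (Fin n), g₀ (permAct π x) * φ (permAct π x)
        = ∑ π : Equiv.Perm (Fin n), ∫ x in Ω, g₀ (permAct π x) * φ (permAct π x) :=
      integral_finset_sum _ (fun π _ => hcompInt (fun x => g₀ x * φ x) hGΦint π)
    have heach : ∀ π : Equiv.Perm (Fin n),
        ∫ x in Ω, g₀ (permAct π x) * φ (permAct π x) = ∫ x in Ω, g₀ x * φ x :=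
      fun π => hchg (fun x => g₀ x * φ x) π
    rw [hsum, Finset.sum_congr rfl (fun π _ => heach π), Finset.sum_const,
      Finset.card_univ, Fintype.card_perm, Fintype.card_fin, nsmul_eq_mul] at hL
    rw [← hL, ← mul_assoc, one_div, inv_mul_cancel₀ hfac, one_mul]
  -- Step 3: chamber decomposition
  set s : Equiv.Perm (Fin n) → Set (Fin n → ℝ) :=
    fun σ => Ω ∩ (permAct σ ⁻¹' ascSet n) with hs
  have hsmeas : ∀ σ, MeasurableSet (s σ) :=
    fun σ => hΩmeas.inter ((permAct_mp σ).measurable (measurable_ascSet n))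
  have hsdisj : Pairwise (Function.onFun Disjoint s) := by
    intro σ τ hst
    refine Set.disjoint_left.2 fun x hxσ hxτ => ?_
    exact hst (sort_unique hxσ.2 hxτ.2)
  have hcover : Ω =ᵐ[volume] ⋃ σ : Equiv.Perm (Fin n), s σ := by
    rw [Filter.eventuallyEq_set]
    have hnull := noninj_null n
    rw [measure_eq_zero_iff_ae_notMem] at hnull
    filter_upwards [hnull] with x hx
    constructor
    · intro hxΩ
      have hxinj : Function.Injective x := by simpa using hx
      obtain ⟨σ, hσ⟩ := exists_sort hxinj
      exact Set.mem_iUnion.2 ⟨σ, hxΩ, hσ⟩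
    · intro hxU
      obtain ⟨σ, hσ⟩ := Set.mem_iUnion.1 hxU
      exact hσ.1
  have hIntS : ∀ σ, IntegrableOn (symmetrize g₀) (s σ) volume :=
    fun σ => hsymmInt.mono_set Set.inter_subset_left
  have heachS : ∀ σ : Equiv.Perm (Fin n),
      ∫ x in s σ, symmetrize g₀ x = ∫ x in Ω ∩ ascSet n, symmetrize g₀ x := by
    intro σ
    have h1 : permAct σ ⁻¹' (Ω ∩ ascSet n) = s σ := by
      rw [Set.preimage_inter, hpre σ]
    have h2 := (permAct_mp σ).setIntegral_preimage_emb (permAct_emb σ)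
      (symmetrize g₀) (Ω ∩ ascSet n)
    rw [h1] at h2
    rw [← h2]
    exact setIntegral_congr_fun (hsmeas σ) fun x _ => (symmetrize_invariant g₀ σ x).symm
  have hdecomp : ∫ x in Ω, symmetrize g₀ x
      = (n.factorial : ℝ) * ∫ x in Ω ∩ ascSet n, symmetrize g₀ x := by
    rw [setIntegral_congr_set hcover,
      integral_iUnion_fintype hsmeas hsdisj hIntS,
      Finset.sum_congr rfl (fun σ _ => heachS σ), Finset.sum_const, Finset.card_univ,
      Fintype.card_perm, Fintype.card_fin, nsmul_eq_mul]
  rw [hInt1, hdecomp, ← mul_assoc]
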